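/- Let G be a finite simple graph with all vertex degrees positive. For every vertex v and every integer δ ≥ 0, the propagating estimator is an upper bound on the core number: k(v) ≤ k̂_δ(v). -/

import Mathlib

open SimpleGraph

variable {V : Type*}

/-- The degree of `u` inside the subgraph of `G` induced on the vertex set `S`. -/
noncomputable def degIn (G : SimpleGraph V) (S : Set V) (u : V) : ℕ :=
  {w ∈ S | G.Adj u w}.ncard

/-- `v` belongs to the `k`-core of `G`: there is a vertex set containing `v` all of whose
vertices have degree at least `k` within the induced subgraph. -/
def inCore (G : SimpleGraph V) (k : ℕ) (v : V) : Prop :=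
  ∃ S : Set V, v ∈ S ∧ ∀ u ∈ S, k ≤ degIn G S u

/-- The core number of `v`: the largest `k` such that `v` belongs to the `k`-core of `G`. -/
noncomputable def coreNumber (G : SimpleGraph V) (v : V) : ℕ :=
  sSup {k | inCore G k v}

/-- Degree of a vertex. -/
noncomputable def deg (G : SimpleGraph V) (v : V) : ℕ :=
  (G.neighborSet v).ncard

/-- The `δ`-neighborhood of `v`: all vertices at shortest-path distance at most `δ` from `v`. -/
def ball (G : SimpleGraph V) (v : V) (δ : ℕ) : Set V :=
  {u | G.Reachable v u ∧ G.dist v u ≤ δ}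

/-- The induced estimator `k̆_δ(v)`: the core number of `v` in `G[N_δ(v)]`. -/
noncomputable def kBreve (G : SimpleGraph V) (v : V) (δ : ℕ) : ℕ :=
  coreNumber (G.induce (_root_.ball G v δ)) ⟨v, Reachable.refl v, by rw [SimpleGraph.dist_self]; exact Nat.zero_le _⟩

/-- Neighborhood of `v` as a `Finset`. -/
noncomputable def nbhd (G : SimpleGraph V) [Finite V] (v : V) : Finset V :=
  (G.neighborSet v).toFinite.toFinset

/-- The propagating estimator `k̂_δ(v)`: `k̂_0(v) = d(v)`, and `k̂_δ(v)` is the max over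
`1 ≤ i ≤ d(v)` of `min (k̂_{δ-1}(u_i)) (d(v) - i + 1)`, where `u_1, …, u_{d(v)}` are the
neighbors of `v` listed with `k̂_{δ-1}`-values nondecreasing.  In the formalization the
sorted list `l` of the neighbors' `k̂_{δ-1}`-values is indexed from `0`, so entry `i` of `l`
is `k̂_{δ-1}(u_{i+1})` and `d(v) - i = d(v) - (i+1) + 1`. -/
noncomputable def kHat (G : SimpleGraph V) [Finite V] : ℕ → V → ℕ
  | 0, v => deg G v
  | δ + 1, v =>
    let l : List ℕ := Multiset.sort ((nbhd G v).val.map (kHat G δ)) (· ≤ ·)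
    (Finset.range l.length).sup fun i => min (l.getD i 0) (deg G v - i)

lemma inCore_zero (G : SimpleGraph V) (v : V) : inCore G 0 v :=
  ⟨Set.univ, Set.mem_univ v, fun _ _ => Nat.zero_le _⟩

lemma degIn_le_deg [Fintype V] (G : SimpleGraph V) (S : Set V) (u : V) :
    degIn G S u ≤ deg G u :=
  Set.ncard_le_ncard (fun _ hw => hw.2) (Set.toFinite _)

lemma bddAbove_inCore [Fintype V] (G : SimpleGraph V) (v : V) :
    BddAbove {k | inCore G k v} := by
  refine ⟨deg G v, fun k hk => ?_⟩
  obtain ⟨S, hvS, hS⟩ := hk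
  exact (hS v hvS).trans (degIn_le_deg G S v)

lemma inCore_coreNumber [Fintype V] (G : SimpleGraph V) (v : V) :
    inCore G (coreNumber G v) v :=
  Nat.sSup_mem ⟨0, inCore_zero G v⟩ (bddAbove_inCore G v)

lemma le_coreNumber [Fintype V] {G : SimpleGraph V} {k : ℕ} {u : V} (h : inCore G k u) :
    k ≤ coreNumber G u :=
  le_csSup (bddAbove_inCore G u) h

lemma sorted_getD_ge {l : List ℕ} (hs : l.Pairwise (· ≤ ·)) {k i : ℕ}
    (hc : k ≤ l.countP (fun x => decide (k ≤ x))) (hi : l.length - k ≤ i)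
    (hlt : i < l.length) :
    k ≤ l.getD i 0 := by
  rw [List.getD_eq_getElem l 0 hlt]
  by_contra h
  push_neg at h
  have hlen := List.length_eq_countP_add_countP (fun x => decide (k ≤ x)) (l := l)
  have htake : (l.take (i+1)).countP (fun a => decide ¬(decide (k ≤ a) = true))
      = (l.take (i+1)).length := by
    rw [List.countP_eq_length]
    intro a ha
    rw [List.mem_take_iff_getElem] at ha
    obtain ⟨j, hj, rfl⟩ := ha
    have hj' : j < l.length := lt_of_lt_of_le hj (min_le_right _ _)
    have hji : j ≤ i := Nat.lt_succ_iff.mp (lt_of_lt_of_le hj (min_le_left _ _))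
    have hle := hs.rel_get_of_le (a := ⟨j, hj'⟩) (b := ⟨i, hlt⟩) hji
    simp only [List.get_eq_getElem] at hle
    simp only [decide_eq_true_eq]
    omega
  have hsub := List.Sublist.countP_le (p := fun a => decide ¬(decide (k ≤ a) = true))
    (List.take_sublist (i+1) l)
  have htl : (l.take (i+1)).length = i + 1 := by
    simp [Nat.min_eq_left (Nat.succ_le_of_lt hlt)]
  rw [htake, htl] at hsub
  omega


/-- in a finite graph with all degrees positive, the propagating estimator is
an upper bound on the core number: `k(v) ≤ k̂_δ(v)`. -/
theorem stmt9 {V : Type*} [Fintype V] (G : SimpleGraph V) (hdeg : ∀ w, 0 < deg G w)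
    (v : V) (δ : ℕ) :
    coreNumber G v ≤ kHat G δ v := by
  classical
  induction δ generalizing v with
  | zero =>
    obtain ⟨S, hvS, hS⟩ := inCore_coreNumber G v
    simpa [kHat] using (hS v hvS).trans (degIn_le_deg G S v)
  | succ δ ih =>
    set k := coreNumber G v with hkdef
    rcases Nat.eq_zero_or_pos k with hk0 | hkpos
    · rw [hk0]; exact Nat.zero_le _
    obtain ⟨S, hvS, hS⟩ := inCore_coreNumber G v
    have hkd : k ≤ deg G v := (hS v hvS).trans (degIn_le_deg G S v)
    have hnb : ∀ w, w ∈ S → k ≤ kHat G δ w := fun w hwS =>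
      (le_coreNumber ⟨S, hwS, hS⟩).trans (ih w)
    set m : Multiset ℕ := (nbhd G v).val.map (kHat G δ) with hm
    set l : List ℕ := Multiset.sort m (· ≤ ·) with hl
    have hlen : l.length = deg G v := by
      rw [hl, Multiset.length_sort, hm, Multiset.card_map]
      rw [deg, Set.ncard_eq_toFinset_card _ (G.neighborSet v).toFinite]
      rfl
    have hcount : k ≤ l.countP (fun x => decide (k ≤ x)) := by
      have h1 : (l : Multiset ℕ).countP (fun x => k ≤ x) = m.countP (fun x => k ≤ x) := by
        rw [hl, Multiset.sort_eq]
      have h2 : m.countP (fun x => k ≤ x)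
          = ((nbhd G v).filter (fun w => k ≤ kHat G δ w)).card := by
        rw [hm, Multiset.countP_map]; rfl
      have h3 : {w ∈ S | G.Adj v w}
          ⊆ (((nbhd G v).filter (fun w => k ≤ kHat G δ w) : Finset V) : Set V) := by
        intro w hw
        simp only [Finset.coe_filter, Set.mem_setOf_eq, Finset.mem_filter]
        constructor
        · rw [nbhd, Set.Finite.mem_toFinset]
          exact hw.2
        · exact hnb w hw.1
      have h4 : k ≤ ((nbhd G v).filter (fun w => k ≤ kHat G δ w)).card := by
        have := Set.ncard_le_ncard h3 (Set.toFinite _)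
        rw [Set.ncard_coe_finset] at this
        exact le_trans (hS v hvS) this
      rw [Multiset.coe_countP] at h1
      omega
    set i := deg G v - k with hidef
    have hilt : i < l.length := by have := hdeg v; omega
    have hget : k ≤ l.getD i 0 :=
      sorted_getD_ge (by rw [hl]; exact Multiset.pairwise_sort _ _) hcount (by omega) hilt
    have hmin : k ≤ min (l.getD i 0) (deg G v - i) := le_min hget (by omega)
    have hsup : min (l.getD i 0) (deg G v - i)
        ≤ (Finset.range l.length).sup (fun j => min (l.getD j 0) (deg G v - j)) :=
      Finset.le_sup (f := fun j => min (l.getD j 0) (deg G v - j)) (Finset.mem_range.mpr hilt)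
    calc k ≤ _ := le_trans hmin hsup
      _ = kHat G (δ + 1) v := rfl
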